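/- For every integer p ≥ 1 and for the polynomial Δ_p(z) = 1 − 4z + 4z^{p+2}, Δ_p has exactly one root of modulus less than 1/2; this root is real and lies in the open interval (1/4, 1/2). For p = 0, Δ_0(z) = (1−2z)² has a double root at 1/2. -/

import Mathlib

lemma two_pow_gt (p : ℕ) (hp : 1 ≤ p) : p + 2 < 2 ^ (p + 1) := by
  induction p with
  | zero => omega
  | succ n ih =>
    rcases Nat.eq_or_lt_of_le hp with h | h
    · simp [← h]
    · have hn : 1 ≤ n := by omega
      have h1 := ih hn
      have h2 : 2 ^ (n + 1 + 1) = 2 * 2 ^ (n + 1) := by ring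
      omega

lemma uniq (p : ℕ) (hp : 1 ≤ p) (z w : ℂ)
    (hz : ‖z‖ < 1 / 2) (hw : ‖w‖ < 1 / 2)
    (hz0 : 1 - 4 * z + 4 * z ^ (p + 2) = 0)
    (hw0 : 1 - 4 * w + 4 * w ^ (p + 2) = 0) : z = w := by
  by_contra hne
  have hsub : z - w = z ^ (p + 2) - w ^ (p + 2) := by
    linear_combination (hw0 - hz0) / 4
  set n := p + 2 with hn
  have hgs := geom_sum₂_mul z w n
  have hS : (∑ i ∈ Finset.range n, z ^ i * w ^ (n - 1 - i)) = 1 := by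
    have hzw : z - w ≠ 0 := sub_ne_zero.mpr hne
    have : ((∑ i ∈ Finset.range n, z ^ i * w ^ (n - 1 - i)) - 1) * (z - w) = 0 := by
      rw [sub_mul, hgs, one_mul, ← hsub, sub_self]
    rcases mul_eq_zero.mp this with h | h
    · exact sub_eq_zero.mp h
    · exact absurd h hzw
  have habs : (1 : ℝ) ≤ (n : ℝ) * (1 / 2) ^ (n - 1) := by
    have h1 : ‖∑ i ∈ Finset.range n, z ^ i * w ^ (n - 1 - i)‖ = 1 := by
      rw [hS]; simp
    calc (1 : ℝ) = ‖∑ i ∈ Finset.range n, z ^ i * w ^ (n - 1 - i)‖ := h1.symm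
      _ ≤ ∑ i ∈ Finset.range n, ‖z ^ i * w ^ (n - 1 - i)‖ := by
          exact norm_sum_le _ _
      _ ≤ ∑ i ∈ Finset.range n, (1 / 2 : ℝ) ^ (n - 1) := by
          apply Finset.sum_le_sum
          intro i hi
          have hi' : i ≤ n - 1 := by
            have := Finset.mem_range.mp hi; omega
          have hz' : ‖z‖ ≤ 1 / 2 := le_of_lt hz
          have hw' : ‖w‖ ≤ 1 / 2 := le_of_lt hw
          rw [norm_mul, norm_pow, norm_pow]
          calc ‖z‖ ^ i * ‖w‖ ^ (n - 1 - i)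
              ≤ (1 / 2 : ℝ) ^ i * (1 / 2 : ℝ) ^ (n - 1 - i) := by
                apply mul_le_mul
                · exact pow_le_pow_left₀ (norm_nonneg z) hz' i
                · exact pow_le_pow_left₀ (norm_nonneg w) hw' _
                · positivity
                · positivity
            _ = (1 / 2 : ℝ) ^ (n - 1) := by
                rw [← pow_add]; congr 1; omega
      _ = (n : ℝ) * (1 / 2) ^ (n - 1) := by
          rw [Finset.sum_const, Finset.card_range, nsmul_eq_mul]
  have hlt : (n : ℝ) * (1 / 2) ^ (n - 1) < 1 := by
    have hkey : (n : ℝ) < 2 ^ (n - 1) := by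
      have := two_pow_gt p hp
      have hn1 : n - 1 = p + 1 := by omega
      rw [hn1]
      exact_mod_cast (by push_cast; exact_mod_cast this : (p : ℝ) + 2 < 2 ^ (p + 1))
    rw [div_pow, one_pow, mul_div_assoc']
    rw [div_lt_one (by positivity)]
    simpa using hkey
  linarith

theorem delta_p_unique_root :
    (∀ p : ℕ, 1 ≤ p → ∃ x : ℝ, 1 / 4 < x ∧ x < 1 / 2 ∧
      ∀ z : ℂ, ‖z‖ < 1 / 2 →
        ((1 - 4 * z + 4 * z ^ (p + 2) = 0) ↔ z = (x : ℂ))) ∧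
    (∀ z : ℂ, 1 - 4 * z + 4 * z ^ (0 + 2) = (1 - 2 * z) ^ 2) := by
  constructor
  · intro p hp
    set f : ℝ → ℝ := fun x => 1 - 4 * x + 4 * x ^ (p + 2) with hf
    have hcont : ContinuousOn f (Set.Icc (1/4 : ℝ) (1/2)) := by
      apply Continuous.continuousOn; continuity
    have hfa : 0 < f (1/4) := by
      simp only [hf]
      have : (0:ℝ) < 4 * (1/4 : ℝ) ^ (p + 2) := by positivity
      nlinarith
    have hfb : f (1/2) < 0 := by
      simp only [hf]
      have h1 : ((1:ℝ)/2) ^ (p + 2) = (1/2)^p * (1/4) := by ring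
      have h2 : ((1:ℝ)/2) ^ p < 1 := by
        apply pow_lt_one₀ (by norm_num) (by norm_num) (by omega)
      nlinarith
    have : (0:ℝ) ∈ Set.Ioo (f (1/2)) (f (1/4)) := ⟨hfb, hfa⟩
    have hsub := intermediate_value_Ioo' (by norm_num : (1/4:ℝ) ≤ 1/2) hcont this
    obtain ⟨x, hx, hfx⟩ := hsub
    refine ⟨x, hx.1, hx.2, ?_⟩
    have hxroot : 1 - 4 * (x:ℂ) + 4 * (x:ℂ) ^ (p + 2) = 0 := by
      simp only [hf] at hfx
      have : ((1 - 4 * x + 4 * x ^ (p + 2) : ℝ) : ℂ) = 0 := by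
        rw [hfx]; simp
      push_cast at this
      linear_combination this
    have hxabs : ‖(x:ℂ)‖ < 1 / 2 := by
      rw [Complex.norm_real, Real.norm_eq_abs, abs_of_pos (by linarith [hx.1])]
      exact hx.2
    intro z hz
    constructor
    · intro hz0
      exact uniq p hp z x hz hxabs hz0 hxroot
    · rintro rfl
      exact hxroot
  · intro z; ring
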